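/- The split equilibrium problem SEP(f,g,C,Q) is Levitin–Polyak well-posed by perturbations if and only if its solution set S is nonempty and diam(S(ε)) → 0 as ε → 0⁺. -/

import Mathlib

open Filter Metric Topology Set

/-- The solution set of the split equilibrium problem SEP(f,g,C,Q). -/
def SEPSol {E₁ E₂ : Type*} [NormedAddCommGroup E₁] [NormedSpace ℝ E₁]
    [NormedAddCommGroup E₂] [NormedSpace ℝ E₂]
    (C : Set E₁) (Q : Set E₂) (A : E₁ →L[ℝ] E₂)
    (f : E₁ → E₁ → ℝ) (g : E₂ → E₂ → ℝ) : Set (E₁ × E₂) :=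
  {u | u.1 ∈ C ∧ u.2 ∈ Q ∧ u.2 = A u.1 ∧
    (∀ x ∈ C, 0 ≤ f u.1 x) ∧ (∀ y ∈ Q, 0 ≤ g u.2 y)}

/-- The approximate solution set S(ε) of the perturbed split equilibrium problem,
where the perturbation parameter ranges over the closed ball M of radius `r`
centered at `pstar`, intersected with the closed ball of radius `ε` around `pstar`. -/
def approxSol {E₁ E₂ N : Type*} [NormedAddCommGroup E₁] [NormedSpace ℝ E₁]
    [NormedAddCommGroup E₂] [NormedSpace ℝ E₂] [NormedAddCommGroup N] [NormedSpace ℝ N]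
    (C : Set E₁) (Q : Set E₂) (A : E₁ →L[ℝ] E₂) (pstar : N) (r : ℝ)
    (ft : N → E₁ → E₁ → ℝ) (gt : N → E₂ → E₂ → ℝ) (ε : ℝ) : Set (E₁ × E₂) :=
  {u | ∃ p : N, ‖p - pstar‖ ≤ r ∧ ‖p - pstar‖ ≤ ε ∧
    infDist u.1 C ≤ ε ∧ infDist u.2 Q ≤ ε ∧ ‖u.2 - A u.1‖ ≤ ε ∧
    (∀ x ∈ C, -ε ≤ ft p u.1 x) ∧ (∀ y ∈ Q, -ε ≤ gt p u.2 y)}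

/-- `u` is a generalized approximating sequence corresponding to the parameter
sequence `p` (which lies in the ball M of radius `r` around `pstar` and converges
to `pstar`) for the split equilibrium problem. -/
def GenApproxSeq {E₁ E₂ N : Type*} [NormedAddCommGroup E₁] [NormedSpace ℝ E₁]
    [NormedAddCommGroup E₂] [NormedSpace ℝ E₂] [NormedAddCommGroup N] [NormedSpace ℝ N]
    (C : Set E₁) (Q : Set E₂) (A : E₁ →L[ℝ] E₂) (pstar : N) (r : ℝ)
    (ft : N → E₁ → E₁ → ℝ) (gt : N → E₂ → E₂ → ℝ)
    (p : ℕ → N) (u : ℕ → E₁ × E₂) : Prop :=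
  (∀ n, ‖p n - pstar‖ ≤ r) ∧ Tendsto p atTop (nhds pstar) ∧
  ∃ ε : ℕ → ℝ, (∀ n, 0 < ε n) ∧ Tendsto ε atTop (nhds 0) ∧
    ∀ n, infDist (u n).1 C ≤ ε n ∧ infDist (u n).2 Q ≤ ε n ∧
      ‖(u n).2 - A (u n).1‖ ≤ ε n ∧
      (∀ x ∈ C, -(ε n) ≤ ft (p n) (u n).1 x) ∧
      (∀ y ∈ Q, -(ε n) ≤ gt (p n) (u n).2 y)

/-- SEP(f,g,C,Q) is Levitin–Polyak well-posed by perturbations: the solution set is a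
singleton and every generalized approximating sequence converges to the unique solution. -/
def LPWellPosedPerturb {E₁ E₂ N : Type*} [NormedAddCommGroup E₁] [NormedSpace ℝ E₁]
    [NormedAddCommGroup E₂] [NormedSpace ℝ E₂] [NormedAddCommGroup N] [NormedSpace ℝ N]
    (C : Set E₁) (Q : Set E₂) (A : E₁ →L[ℝ] E₂) (pstar : N) (r : ℝ)
    (ft : N → E₁ → E₁ → ℝ) (gt : N → E₂ → E₂ → ℝ) : Prop :=
  ∃ ustar : E₁ × E₂, SEPSol C Q A (ft pstar) (gt pstar) = {ustar} ∧
    ∀ (p : ℕ → N) (u : ℕ → E₁ × E₂), GenApproxSeq C Q A pstar r ft gt p u →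
      Tendsto u atTop (nhds ustar)

/-- SEP(f,g,C,Q) is Levitin–Polyak well-posed by perturbations in the generalized sense:
the solution set is nonempty and every generalized approximating sequence has a
subsequence converging to some solution. -/
def GenLPWellPosedPerturb {E₁ E₂ N : Type*} [NormedAddCommGroup E₁] [NormedSpace ℝ E₁]
    [NormedAddCommGroup E₂] [NormedSpace ℝ E₂] [NormedAddCommGroup N] [NormedSpace ℝ N]
    (C : Set E₁) (Q : Set E₂) (A : E₁ →L[ℝ] E₂) (pstar : N) (r : ℝ)
    (ft : N → E₁ → E₁ → ℝ) (gt : N → E₂ → E₂ → ℝ) : Prop :=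
  (SEPSol C Q A (ft pstar) (gt pstar)).Nonempty ∧
    ∀ (p : ℕ → N) (u : ℕ → E₁ × E₂), GenApproxSeq C Q A pstar r ft gt p u →
      ∃ ustar ∈ SEPSol C Q A (ft pstar) (gt pstar), ∃ φ : ℕ → ℕ, StrictMono φ ∧
        Tendsto (u ∘ φ) atTop (nhds ustar)

/-- The Kuratowski measure of noncompactness: the infimum of all `ε > 0` such that the
set can be covered by finitely many sets, each of diameter `< ε`. -/
noncomputable def kuratowskiMNC {X : Type*} [PseudoEMetricSpace X] (s : Set X) : ENNReal :=
  sInf {ε : ENNReal | 0 < ε ∧ ∃ t : Finset (Set X), (s ⊆ ⋃ a ∈ t, (a : Set X)) ∧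
    ∀ a ∈ t, EMetric.diam a < ε}


lemma sol_subset_approx
    {E₁ E₂ N : Type*} [NormedAddCommGroup E₁] [NormedSpace ℝ E₁]
    [NormedAddCommGroup E₂] [NormedSpace ℝ E₂]
    [NormedAddCommGroup N] [NormedSpace ℝ N]
    (C : Set E₁) (Q : Set E₂)
    (A : E₁ →L[ℝ] E₂) (pstar : N) (r : ℝ) (hr : 0 ≤ r)
    (ftil : N → E₁ → E₁ → ℝ) (gtil : N → E₂ → E₂ → ℝ)
    {ε : ℝ} (hε : 0 ≤ ε) :
    SEPSol C Q A (ftil pstar) (gtil pstar) ⊆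
      approxSol C Q A pstar r ftil gtil ε := by
  rintro ⟨z, w⟩ ⟨hz, hw, he, hf, hg⟩
  refine ⟨pstar, by simpa using hr, by simpa using hε, ?_, ?_, ?_, ?_, ?_⟩
  · simpa [infDist_zero_of_mem hz] using hε
  · simpa [infDist_zero_of_mem hw] using hε
  · simp [show w = A z from he, hε]
  · exact fun x hx => le_trans (by linarith) (hf x hx)
  · exact fun y hy => le_trans (by linarith) (hg y hy)

/-- **Theorem 4.1.** SEP(f,g,C,Q) is Levitin–Polyak well-posed by perturbations if and
only if its solution set is nonempty and diam(S(ε)) → 0 as ε → 0⁺. -/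
theorem sep_lp_wellposed_iff_diam_tendsto_zero
    {E₁ E₂ N : Type*} [NormedAddCommGroup E₁] [NormedSpace ℝ E₁] [CompleteSpace E₁]
    [NormedAddCommGroup E₂] [NormedSpace ℝ E₂] [CompleteSpace E₂]
    [NormedAddCommGroup N] [NormedSpace ℝ N]
    (C : Set E₁) (Q : Set E₂) (hCne : C.Nonempty) (hCcl : IsClosed C) (hCcv : Convex ℝ C)
    (hQne : Q.Nonempty) (hQcl : IsClosed Q) (hQcv : Convex ℝ Q)
    (A : E₁ →L[ℝ] E₂) (pstar : N) (r : ℝ) (hr : 0 < r)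
    (ftil : N → E₁ → E₁ → ℝ) (gtil : N → E₂ → E₂ → ℝ) :
    LPWellPosedPerturb C Q A pstar r ftil gtil ↔
      (SEPSol C Q A (ftil pstar) (gtil pstar)).Nonempty ∧
        Tendsto (fun ε : ℝ => EMetric.diam (approxSol C Q A pstar r ftil gtil ε))
          (𝓝[>] (0 : ℝ)) (nhds 0) := by
  constructor
  · rintro ⟨ustar, hS, hconv⟩
    have hmem : ustar ∈ SEPSol C Q A (ftil pstar) (gtil pstar) := by rw [hS]; exact rfl
    refine ⟨⟨ustar, hmem⟩, ?_⟩
    rw [ENNReal.tendsto_nhds_zero]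
    intro δ hδ
    by_contra hcon
    rw [Filter.not_eventually] at hcon
    have hfreq : ∃ᶠ t in 𝓝[>] (0:ℝ),
        (¬ EMetric.diam (approxSol C Q A pstar r ftil gtil t) ≤ δ) ∧ 0 < t :=
      hcon.and_eventually (eventually_mem_nhdsWithin)
    obtain ⟨t, htt, ht⟩ := Filter.exists_seq_forall_of_frequently hfreq
    have ht0 : Tendsto t atTop (𝓝 (0:ℝ)) := htt.mono_right nhdsWithin_le_nhds
    -- extract two far points in each approx set
    have hpts : ∀ n, ∃ a ∈ approxSol C Q A pstar r ftil gtil (t n),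
        ∃ b ∈ approxSol C Q A pstar r ftil gtil (t n), δ < edist a b := by
      intro n
      have := (ht n).1
      change ¬ Metric.ediam _ ≤ δ at this
      rw [EMetric.diam_le_iff] at this
      push_neg at this
      obtain ⟨a, ha, b, hb, hab⟩ := this
      exact ⟨a, ha, b, hb, hab⟩
    choose a ha b hb hab using hpts
    -- a and b are generalized approximating sequences
    have key : ∀ (u : ℕ → E₁ × E₂),
        (∀ n, u n ∈ approxSol C Q A pstar r ftil gtil (t n)) →
        Tendsto u atTop (𝓝 ustar) := by
      intro u hu
      choose p hp1 hp2 hp3 hp4 hp5 hp6 hp7 using hu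
      have hptend : Tendsto p atTop (𝓝 pstar) := by
        rw [tendsto_iff_norm_sub_tendsto_zero]
        exact squeeze_zero (fun n => norm_nonneg _) hp2 ht0
      exact hconv p u ⟨hp1, hptend, t, fun n => (ht n).2, ht0,
        fun n => ⟨hp3 n, hp4 n, hp5 n, hp6 n, hp7 n⟩⟩
    have hta := key a ha
    have htb := key b hb
    have hed : Tendsto (fun n => edist (a n) (b n)) atTop (𝓝 (edist ustar ustar)) :=
      hta.edist htb
    rw [edist_self] at hed
    have : ∀ᶠ n in atTop, edist (a n) (b n) < δ := hed.eventually_lt_const hδ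
    obtain ⟨n, hn⟩ := this.exists
    exact absurd (hab n) (not_lt.mpr hn.le)
  · rintro ⟨⟨ustar, hu⟩, hdiam⟩
    -- uniqueness
    have huniq : ∀ v ∈ SEPSol C Q A (ftil pstar) (gtil pstar), v = ustar := by
      intro v hv
      by_contra hne
      have hpos : 0 < edist v ustar := edist_pos.mpr hne
      have hev : ∀ᶠ ε in 𝓝[>] (0:ℝ),
          EMetric.diam (approxSol C Q A pstar r ftil gtil ε) < edist v ustar :=
        hdiam.eventually_lt_const hpos
      obtain ⟨ε, hlt, hεpos⟩ := (hev.and eventually_mem_nhdsWithin).exists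
      have hεpos' : (0:ℝ) < ε := hεpos
      have h1 := sol_subset_approx C Q A pstar r hr.le ftil gtil hεpos'.le hv
      have h2 := sol_subset_approx C Q A pstar r hr.le ftil gtil hεpos'.le hu
      exact absurd (EMetric.edist_le_diam_of_mem h1 h2) (not_le.mpr hlt)
    refine ⟨ustar, Set.eq_singleton_iff_unique_mem.mpr ⟨hu, huniq⟩, ?_⟩
    intro p u hGAS
    obtain ⟨hpr, hp, ε, hεpos, hε0, hcond⟩ := hGAS
    set δ : ℕ → ℝ := fun n => max (ε n) ‖p n - pstar‖ with hδdef
    have hδpos : ∀ n, 0 < δ n := fun n => lt_max_of_lt_left (hεpos n)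
    have hεδ : ∀ n, ε n ≤ δ n := fun n => le_max_left _ _
    have humem : ∀ n, u n ∈ approxSol C Q A pstar r ftil gtil (δ n) := by
      intro n
      obtain ⟨h1, h2, h3, h4, h5⟩ := hcond n
      refine ⟨p n, hpr n, le_max_right _ _, h1.trans (hεδ n), h2.trans (hεδ n),
        h3.trans (hεδ n), fun x hx => le_trans (by simpa using neg_le_neg (hεδ n)) (h4 x hx),
        fun y hy => le_trans (by simpa using neg_le_neg (hεδ n)) (h5 y hy)⟩
    have hδ0 : Tendsto δ atTop (𝓝 (0:ℝ)) := by
      have hnorm : Tendsto (fun n => ‖p n - pstar‖) atTop (𝓝 0) :=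
        tendsto_iff_norm_sub_tendsto_zero.mp hp
      have := hε0.max hnorm
      simpa using this
    have hδin : Tendsto δ atTop (𝓝[>] (0:ℝ)) :=
      tendsto_nhdsWithin_of_tendsto_nhds_of_eventually_within _ hδ0
        (Filter.Eventually.of_forall (fun n => hδpos n))
    have hdiamδ : Tendsto (fun n => EMetric.diam (approxSol C Q A pstar r ftil gtil (δ n)))
        atTop (𝓝 0) := hdiam.comp hδin
    have hedist : Tendsto (fun n => edist (u n) ustar) atTop (𝓝 0) := by
      refine tendsto_of_tendsto_of_tendsto_of_le_of_le tendsto_const_nhds hdiamδ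
        (fun n => zero_le) (fun n => ?_)
      exact EMetric.edist_le_diam_of_mem (humem n)
        (sol_subset_approx C Q A pstar r hr.le ftil gtil (hδpos n).le hu)
    rw [EMetric.tendsto_nhds]
    intro c hc
    exact hedist.eventually_lt_const hc
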